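/- Let Q'(x,y,z) = Q⁰(x,y,z) - (1/8){N(φ²z, φ²y, φ²x) + 2N(φz, φy, ξ)η(x)}, where Q⁰(x,y,z) = ½{F(x,φy,z) + η(z)F(x,φy,ξ) - 2η(y)F(x,φz,ξ)} and N is the Nijenhuis-type tensor built from F. Then Q' also satisfies the natural-connection conditions Q'(x,y,φz) - Q'(x,φy,z) = F(x,y,z) and Q'(x,y,z) = -Q'(x,z,y). -/
import Mathlib


set_option maxHeartbeats 2000000 in
theorem stmt15 (V : Type*) [AddCommGroup V] [Module ℝ V]
    (φ : V →ₗ[ℝ] V) (ξ : V) (η : V →ₗ[ℝ] ℝ)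
    (hφξ : φ ξ = 0) (hφ2 : ∀ x : V, φ (φ x) = -x + η x • ξ)
    (hηφ : ∀ x : V, η (φ x) = 0) (hηξ : η ξ = 1)
    (g : V →ₗ[ℝ] V →ₗ[ℝ] ℝ) (hsym : ∀ x y : V, g x y = g y x)
    (hB : ∀ x y : V, g (φ x) (φ y) = - g x y + η x * η y)
    (F : V →ₗ[ℝ] V →ₗ[ℝ] V →ₗ[ℝ] ℝ)
    (hF1 : ∀ x y z : V, F x y z = F x z y)
    (hF2 : ∀ x y z : V, F x y z = F x (φ y) (φ z) + η y * F x ξ z + η z * F x y ξ)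
    (Q0 : V → V → V → ℝ)
    (hQ0 : ∀ x y z : V, Q0 x y z =
      (1 / 2) * (F x (φ y) z + η z * F x (φ y) ξ - 2 * η y * F x (φ z) ξ))
    (N : V → V → V → ℝ)
    (hN : ∀ x y z : V, N x y z = F (φ x) y z - F x y (φ z) + F x (φ y) ξ * η z
          - F (φ y) x z + F y x (φ z) - F y (φ x) ξ * η z)
    (Q' : V → V → V → ℝ)
    (hQ' : ∀ x y z : V, Q' x y z = Q0 x y z
      - (1 / 8) * (N (φ (φ z)) (φ (φ y)) (φ (φ x)) + 2 * N (φ z) (φ y) ξ * η x)) :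
    (∀ x y z : V, Q' x y (φ z) - Q' x (φ y) z = F x y z) ∧
    (∀ x y z : V, Q' x y z = - Q' x z y) := by
  constructor
  · intro x y z
    have e1 := hF2 x y z
    have e2 := hF2 x y ξ
    have e3 := hF1 x z ξ
    have e4 := hF2 y x ξ
    have e5 := hF2 y z x
    have e6 := hF2 z x ξ
    have e7 := hF2 z y x
    have e8 := hF2 ξ x ξ
    have e9 := hF2 ξ y x
    have e10 := hF2 ξ z x
    have e11 := hF2 (φ y) z (φ x)
    have e12 := hF2 (φ z) y (φ x)
    simp only [hQ', hQ0, hN, hφ2, hφξ, hηφ, hηξ, map_add, map_neg, map_smul, map_zero,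
      LinearMap.add_apply, LinearMap.neg_apply, LinearMap.smul_apply, LinearMap.zero_apply,
      smul_eq_mul, mul_one, mul_zero, zero_mul, add_zero, zero_add, neg_neg] at e1 e2 e3 e4 e5 e6 e7 e8 e9 e10 e11 e12
    simp only [hQ', hQ0, hN, hφ2, hφξ, hηφ, hηξ, map_add, map_neg, map_smul, map_zero,
      LinearMap.add_apply, LinearMap.neg_apply, LinearMap.smul_apply, LinearMap.zero_apply,
      smul_eq_mul, mul_one, mul_zero, zero_mul, add_zero, zero_add, neg_neg]
    linear_combination (-(1:ℝ)/2) * e1 + ((3:ℝ)/2) * η z * e2 + η y * e3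
      + ((1:ℝ)/8) * η z * e4 + (-(1:ℝ)/8) * e5 + ((1:ℝ)/8) * η y * e6
      + (-(1:ℝ)/8) * e7 + (-(1:ℝ)/4) * η y * η z * e8 + ((1:ℝ)/8) * η z * e9
      + ((1:ℝ)/8) * η y * e10 + (-(1:ℝ)/8) * e11 + (-(1:ℝ)/8) * e12
  · intro x y z
    have e1 := hF2 x z (φ y)
    have e2 := hF1 x z (φ y)
    have e3 := hF1 x ξ (φ y)
    simp only [hQ', hQ0, hN, hφ2, hφξ, hηφ, hηξ, map_add, map_neg, map_smul, map_zero,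
      LinearMap.add_apply, LinearMap.neg_apply, LinearMap.smul_apply, LinearMap.zero_apply,
      smul_eq_mul, mul_one, mul_zero, zero_mul, add_zero, zero_add, neg_neg] at e1 e2 e3 ⊢
    linear_combination ((1:ℝ)/2) * e1 + (-(1:ℝ)/2) * e2 + ((1:ℝ)/2) * η z * e3
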